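/- Let G be a simple graph on n vertices with minimum degree δ ≥ 1 and 0 ≤ α < 1. Let x be a non-negative unit eigenvector of A_α(G) corresponding to λ_α(G), and let x_min be the minimum coordinate of x. Then x_min² ≤ δ(1-α)² / ((λ_α(G) - α·δ)² + δ(n-δ)(1-α)²). -/
import Mathlib


open Finset Matrix

noncomputable def Aalpha {V : Type*} [Fintype V] [DecidableEq V]
    (G : SimpleGraph V) [DecidableRel G.Adj] (α : ℝ) : Matrix V V ℝ :=
  α • Matrix.diagonal (fun v => (G.degree v : ℝ)) + (1 - α) • G.adjMatrix ℝ

noncomputable def lamAlpha {V : Type*} [Fintype V] [DecidableEq V]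
    (G : SimpleGraph V) [DecidableRel G.Adj] (α : ℝ) : ℝ :=
  sSup (spectrum ℝ (Aalpha G α))

theorem min_coord_sq_upper_bound {n : ℕ}
    (G : SimpleGraph (Fin n)) [DecidableRel G.Adj]
    (α : ℝ) (h0 : 0 ≤ α) (h1 : α < 1)
    (hδ : 1 ≤ G.minDegree)
    (x : Fin n → ℝ) (hxnn : ∀ v, 0 ≤ x v) (hunit : ∑ v, x v ^ 2 = 1)
    (heig : (Aalpha G α).mulVec x = lamAlpha G α • x)
    (w : Fin n) (hw : ∀ v, x w ≤ x v) :
    x w ^ 2 ≤ (G.minDegree : ℝ) * (1 - α) ^ 2 /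
      ((lamAlpha G α - α * (G.minDegree : ℝ)) ^ 2 +
        (G.minDegree : ℝ) * ((n : ℝ) - (G.minDegree : ℝ)) * (1 - α) ^ 2) := by
  classical
  have hn : 0 < n := by
    rcases Nat.eq_zero_or_pos n with h | h
    · subst h
      have : G.minDegree = 0 := by
        simp [SimpleGraph.minDegree]
      omega
    · exact h
  haveI : Nonempty (Fin n) := ⟨⟨0, hn⟩⟩
  set lam : ℝ := lamAlpha G α with hlamdef
  set δ : ℝ := (G.minDegree : ℝ) with hδdef
  have hδpos : 0 < δ := by
    have : (1 : ℝ) ≤ δ := by rw [hδdef]; exact_mod_cast hδ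
    linarith
  -- eigen equation per vertex
  have heq : ∀ v, lam * x v = α * (G.degree v) * x v
      + (1 - α) * ∑ u ∈ G.neighborFinset v, x u := by
    intro v
    have h := congrFun heig v
    simp only [Aalpha, Matrix.add_mulVec, Matrix.smul_mulVec,
      Pi.add_apply, Pi.smul_apply, smul_eq_mul,
      Matrix.mulVec_diagonal, SimpleGraph.adjMatrix_mulVec_apply] at h
    linarith [h]
  have h1α : (0:ℝ) < 1 - α := by linarith
  -- lam ≥ α δ
  obtain ⟨v0, hv0⟩ := Finite.exists_max x
  have hv0pos : 0 < x v0 := by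
    rcases lt_or_eq_of_le (hxnn v0) with h | h
    · exact h
    · exfalso
      have hz : ∀ v, x v = 0 := fun v => le_antisymm (by rw [h]; exact hv0 v) (hxnn v)
      simp [hz] at hunit
  have hlamge : α * δ ≤ lam := by
    have hnb : 0 ≤ ∑ u ∈ G.neighborFinset v0, x u :=
      Finset.sum_nonneg fun u _ => hxnn u
    have hdeg : δ ≤ (G.degree v0 : ℝ) := by
      rw [hδdef]; exact_mod_cast G.minDegree_le_degree v0
    have h := heq v0
    have : α * δ * x v0 ≤ lam * x v0 := by
      have h2 : α * δ * x v0 ≤ α * (G.degree v0) * x v0 :=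
        mul_le_mul_of_nonneg_right (mul_le_mul_of_nonneg_left hdeg h0) (hxnn v0)
      nlinarith
    exact le_of_mul_le_mul_right this hv0pos
  -- vertex of minimum degree
  obtain ⟨u, hu⟩ := G.exists_minimal_degree_vertex
  set S : ℝ := ∑ v ∈ G.neighborFinset u, x v with hSdef
  have hSnn : 0 ≤ S := Finset.sum_nonneg fun v _ => hxnn v
  have hequ : (lam - α * δ) * x u = (1 - α) * S := by
    have h := heq u
    rw [← hu] at h
    rw [hδdef]
    ring_nf
    ring_nf at h
    linarith
  have key1 : (lam - α * δ) * x w ≤ (1 - α) * S := by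
    calc (lam - α * δ) * x w ≤ (lam - α * δ) * x u :=
          mul_le_mul_of_nonneg_left (hw u) (by linarith)
      _ = (1 - α) * S := hequ
  have key1nn : 0 ≤ (lam - α * δ) * x w :=
    mul_nonneg (by linarith) (hxnn w)
  have key2 : ((lam - α * δ) * x w) ^ 2 ≤ (1 - α) ^ 2 * S ^ 2 := by
    have := pow_le_pow_left₀ key1nn key1 2
    calc ((lam - α * δ) * x w) ^ 2 ≤ ((1 - α) * S) ^ 2 := this
      _ = (1 - α) ^ 2 * S ^ 2 := by ring
  -- Cauchy–Schwarz
  have hcard : ((G.neighborFinset u).card : ℝ) = δ := by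
    rw [G.card_neighborFinset_eq_degree, ← hu]
  have hCS : S ^ 2 ≤ δ * ∑ v ∈ G.neighborFinset u, x v ^ 2 := by
    have := sq_sum_le_card_mul_sum_sq (s := G.neighborFinset u) (f := x)
    calc S ^ 2 ≤ ((G.neighborFinset u).card : ℝ) * ∑ v ∈ G.neighborFinset u, x v ^ 2 := by
          exact_mod_cast this
      _ = δ * ∑ v ∈ G.neighborFinset u, x v ^ 2 := by rw [hcard]
  -- complement bound
  have hδle : (G.minDegree : ℕ) ≤ n := by
    have := G.degree_lt_card_verts u
    have h2 := G.minDegree_le_degree u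
    simp only [Fintype.card_fin] at this
    omega
  have hδltn : δ < (n : ℝ) := by
    have h3 := G.degree_lt_card_verts u
    simp only [Fintype.card_fin] at h3
    have : G.minDegree < n := lt_of_le_of_lt (G.minDegree_le_degree u) h3
    rw [hδdef]
    exact_mod_cast this
  have hsum : ∑ v ∈ G.neighborFinset u, x v ^ 2 ≤ 1 - ((n : ℝ) - δ) * x w ^ 2 := by
    have hsub : G.neighborFinset u ⊆ Finset.univ := Finset.subset_univ _
    have hsplit := Finset.sum_sdiff (f := fun v => x v ^ 2) hsub
    have hcomp : ((n : ℝ) - δ) * x w ^ 2 ≤ ∑ v ∈ Finset.univ \ G.neighborFinset u, x v ^ 2 := by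
      have hcard2 : ((Finset.univ \ G.neighborFinset u).card : ℝ) = (n : ℝ) - δ := by
        rw [Finset.card_sdiff_of_subset hsub]
        rw [Finset.card_univ, Fintype.card_fin, G.card_neighborFinset_eq_degree, ← hu]
        rw [Nat.cast_sub hδle, hδdef]
      calc ((n : ℝ) - δ) * x w ^ 2
          = ∑ _v ∈ Finset.univ \ G.neighborFinset u, x w ^ 2 := by
            rw [Finset.sum_const, nsmul_eq_mul, hcard2]
        _ ≤ ∑ v ∈ Finset.univ \ G.neighborFinset u, x v ^ 2 :=
            Finset.sum_le_sum fun v _ => pow_le_pow_left₀ (hxnn w) (hw v) 2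
    have : ∑ v ∈ G.neighborFinset u, x v ^ 2
        = 1 - ∑ v ∈ Finset.univ \ G.neighborFinset u, x v ^ 2 := by
      rw [← hunit, ← hsplit]; ring
    rw [this]
    linarith
  -- combine
  have hmain : ((lam - α * δ) ^ 2 + δ * ((n : ℝ) - δ) * (1 - α) ^ 2) * x w ^ 2
      ≤ δ * (1 - α) ^ 2 := by
    have c1 : ((lam - α * δ) * x w) ^ 2 ≤ (1 - α) ^ 2 * (δ * (1 - ((n : ℝ) - δ) * x w ^ 2)) := by
      calc ((lam - α * δ) * x w) ^ 2 ≤ (1 - α) ^ 2 * S ^ 2 := key2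
        _ ≤ (1 - α) ^ 2 * (δ * ∑ v ∈ G.neighborFinset u, x v ^ 2) := by
            exact mul_le_mul_of_nonneg_left hCS (by positivity)
        _ ≤ (1 - α) ^ 2 * (δ * (1 - ((n : ℝ) - δ) * x w ^ 2)) := by
            apply mul_le_mul_of_nonneg_left _ (by positivity)
            exact mul_le_mul_of_nonneg_left hsum (le_of_lt hδpos)
    nlinarith [c1]
  have hD : 0 < (lam - α * δ) ^ 2 + δ * ((n : ℝ) - δ) * (1 - α) ^ 2 := by
    have : 0 < δ * ((n : ℝ) - δ) * (1 - α) ^ 2 := by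
      apply mul_pos (mul_pos hδpos (by linarith)) (by positivity)
    nlinarith [sq_nonneg (lam - α * δ)]
  rw [le_div_iff₀ hD]
  linarith [hmain]
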